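/- arXiv:1308.1327 — 3 statements merged into one kernel-verified Lean document; each statement's English description precedes it below -/
import Mathlib

section
/- Let u : [0,∞) → ℝ be absolutely continuous with |u(t)| ≤ M e^{λ₀ t} and |u′(t)| ≤ M e^{λ₀ t} almost everywhere, for some M, λ₀ > 0. Then for every real λ > λ₀, ∫₀^∞ e^{−λt} [ b u′(t) + ∫₀^t u′(t−s) ν(s) ds ] dt = f(λ) · ∫₀^∞ e^{−λt} u(t) dt − (f(λ)/λ) · u(0). -/
open MeasureTheory Set Real Filter
open scoped ENNReal

private lemma expDeriv {l : ℝ} (x : ℝ) (hl : l ≠ 0) :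
    HasDerivAt (fun t : ℝ => -Real.exp (-(l * t)) / l) (Real.exp (-(l * x))) x := by
  have h1 : HasDerivAt (fun t : ℝ => -(l * t)) (-l) x := by
    simpa using ((hasDerivAt_id x).const_mul (-l))
  have h2 := (Real.hasDerivAt_exp (-(l * x))).comp x h1
  have h3 := h2.neg.div_const l
  convert h3 using 1
  exacts [rfl, rfl, rfl, by rw [eq_div_iff hl]; ring]

private lemma expIntOn {l : ℝ} (hl : 0 < l) (c : ℝ) :
    IntegrableOn (fun t : ℝ => Real.exp (-(l * t))) (Set.Ioi c) := by
  simpa [neg_mul] using exp_neg_integrableOn_Ioi c hl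

private lemma expIntVal {l : ℝ} (hl : 0 < l) (c : ℝ) :
    ∫ t in Set.Ioi c, Real.exp (-(l * t)) = Real.exp (-(l * c)) / l := by
  have htend : Tendsto (fun t : ℝ => -Real.exp (-(l * t)) / l) atTop (nhds 0) := by
    have h1 : Tendsto (fun t : ℝ => -(l * t)) atTop atBot :=
      Filter.tendsto_neg_atTop_atBot.comp (Filter.Tendsto.const_mul_atTop hl tendsto_id)
    have h2 : Tendsto (fun t : ℝ => Real.exp (-(l * t))) atTop (nhds 0) :=
      Real.tendsto_exp_atBot.comp h1
    simpa using (h2.neg).div_const l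
  have := integral_Ioi_of_hasDerivAt_of_tendsto'
    (f := fun t : ℝ => -Real.exp (-(l * t)) / l) (f' := fun t : ℝ => Real.exp (-(l * t)))
    (fun x _ => expDeriv x hl.ne') (expIntOn hl c) htend
  rw [this]; ring

private lemma expLIntVal {l : ℝ} (hl : 0 < l) (c : ℝ) :
    ∫⁻ t in Set.Ioi c, ENNReal.ofReal (Real.exp (-(l * t)))
      = ENNReal.ofReal (Real.exp (-(l * c)) / l) := by
  rw [← expIntVal hl c,
    ofReal_integral_eq_lintegral_ofReal (expIntOn hl c)
      (ae_of_all _ fun x => (Real.exp_pos _).le)]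

private lemma expIntIoc {l : ℝ} (hl : l ≠ 0) (s : ℝ) :
    ∫ r in (0:ℝ)..s, Real.exp (-(l * r)) = (1 - Real.exp (-(l * s))) / l := by
  have := intervalIntegral.integral_eq_sub_of_hasDerivAt
    (f := fun t : ℝ => -Real.exp (-(l * t)) / l) (f' := fun t : ℝ => Real.exp (-(l * t)))
    (fun x _ => expDeriv x hl)
    ((Real.continuous_exp.comp (by continuity)).intervalIntegrable 0 s)
  rw [this]; simp; ring

private lemma expIntIocPos {c : ℝ} (hc : c ≠ 0) (s : ℝ) :
    ∫ r in (0:ℝ)..s, Real.exp (c * r) = (Real.exp (c * s) - 1) / c := by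
  have h := expIntIoc (l := -c) (neg_ne_zero.mpr hc) s
  simp only [neg_mul, neg_neg] at h
  rw [h, div_neg, ← neg_div]
  congr 1
  ring

private lemma nullReflect {E : Set ℝ} (hE : volume E = 0) (t : ℝ) :
    volume ((fun s : ℝ => t - s) ⁻¹' E) = 0 := by
  have h1 : (fun s : ℝ => t - s) ⁻¹' E ⊆ (fun s : ℝ => t - s) ⁻¹' (toMeasurable volume E) :=
    Set.preimage_mono (subset_toMeasurable _ _)
  refine le_antisymm (le_trans (measure_mono h1) ?_) zero_le
  rw [(Measure.measurePreserving_sub_left volume t).measure_preimage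
    (measurableSet_toMeasurable _ _).nullMeasurableSet, measure_toMeasurable, hE]

private lemma nullProd {E : Set ℝ} (hE : volume E = 0) :
    ∀ᵐ p ∂((volume.restrict (Set.Ioi (0:ℝ))).prod (volume.restrict (Set.Ioi (0:ℝ)))),
      p.1 - p.2 ∉ E := by
  set E' := toMeasurable volume E with hE'
  have hEm : MeasurableSet E' := measurableSet_toMeasurable _ _
  have hS : MeasurableSet {p : ℝ × ℝ | p.1 - p.2 ∈ E'} :=
    (measurable_fst.sub measurable_snd) hEm
  have h0 : ((volume.restrict (Set.Ioi (0:ℝ))).prod (volume.restrict (Set.Ioi (0:ℝ))))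
      {p : ℝ × ℝ | p.1 - p.2 ∈ E'} = 0 := by
    rw [Measure.measure_prod_null hS]
    refine ae_of_all _ fun x => ?_
    show (volume.restrict (Set.Ioi (0:ℝ))) ((fun s : ℝ => x - s) ⁻¹' E') = (0 : ℝ → ℝ≥0∞) x
    simp only [Pi.zero_apply]
    refine le_antisymm (le_trans (Measure.restrict_le_self _) ?_) zero_le
    rw [nullReflect (by rw [measure_toMeasurable]; exact hE) x]
  have h1 : ∀ᵐ p ∂((volume.restrict (Set.Ioi (0:ℝ))).prod (volume.restrict (Set.Ioi (0:ℝ)))),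
      p.1 - p.2 ∉ E' := by
    rw [ae_iff]; simpa using h0
  filter_upwards [h1] with p hp hmem
  exact hp (subset_toMeasurable _ _ hmem)

private lemma IooEq (t : ℝ) : Set.Iio t ∩ Set.Ioi (0:ℝ) = Set.Ioo 0 t := by
  ext x; simp only [Set.mem_inter_iff, Set.mem_Iio, Set.mem_Ioi, Set.mem_Ioo]; tauto

/-- Laplace transform of the generalized Dzerbayshan–Caputo derivative
`u ↦ b u′(t) + ∫₀^t u′(t−s) ν(s) ds` associated with the Bernstein function
`f(λ) = a + bλ + ∫₀^∞ (1 − e^{−λs}) ν̄(ds)` with Lévy tail `ν(s) = a + ν̄((s,∞))`: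
for every real `λ > λ₀`,
`∫₀^∞ e^{−λt} [ b u′(t) + ∫₀^t u′(t−s) ν(s) ds ] dt
  = f(λ) ∫₀^∞ e^{−λt} u(t) dt − (f(λ)/λ) u(0)`. -/
theorem laplace_generalized_caputo
    (a b : ℝ) (ha : 0 ≤ a) (hb : 0 ≤ b)
    (nb : Measure ℝ)
    (hint : ∫⁻ s in Set.Ioi (0 : ℝ), ENNReal.ofReal (min s 1) ∂nb ≠ ⊤)
    (f nt : ℝ → ℝ)
    (hf : ∀ l : ℝ, 0 < l →
      f l = a + b * l + ∫ s in Set.Ioi (0 : ℝ), (1 - Real.exp (-(l * s))) ∂nb)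
    (hnt : ∀ s : ℝ, 0 < s → nt s = a + (nb (Set.Ioi s)).toReal)
    (u u' : ℝ → ℝ) (M lam0 : ℝ) (hM : 0 < M) (hlam0 : 0 < lam0)
    -- `u` is absolutely continuous on `[0,∞)` with derivative `u'`
    (hu'int : ∀ d : ℝ, 0 < d → IntegrableOn u' (Set.Icc 0 d))
    (huAC : ∀ x : ℝ, 0 ≤ x → u x = u 0 + ∫ y in (0 : ℝ)..x, u' y)
    (hub : ∀ t : ℝ, 0 ≤ t → |u t| ≤ M * Real.exp (lam0 * t))
    (hu'b : ∀ᵐ t ∂(volume.restrict (Set.Ioi (0 : ℝ))), |u' t| ≤ M * Real.exp (lam0 * t)) :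
    ∀ l : ℝ, lam0 < l →
      ∫ t in Set.Ioi (0 : ℝ),
          Real.exp (-(l * t)) * (b * u' t + ∫ s in (0 : ℝ)..t, u' (t - s) * nt s)
        = f l * (∫ t in Set.Ioi (0 : ℝ), Real.exp (-(l * t)) * u t) - (f l / l) * u 0 := by
  intro l hl
  have hl0 : 0 < l := hlam0.trans hl
  have hll : 0 < l - lam0 := by linarith
  set μ := volume.restrict (Set.Ioi (0:ℝ)) with hmudef
  have hexpm : Measurable fun t : ℝ => Real.exp (-(l * t)) :=
    (Real.continuous_exp.comp (continuous_const.mul continuous_id).neg).measurable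
  -- measurable representative of u'
  have hu'm : AEStronglyMeasurable u' μ := by
    have h1 : AEStronglyMeasurable u' (volume.restrict (⋃ n : ℕ, Set.Icc (0:ℝ) (n+1))) := by
      rw [aestronglyMeasurable_iUnion_iff]
      intro n
      exact (hu'int (n+1) (by positivity)).aestronglyMeasurable
    refine h1.mono_measure (Measure.restrict_mono ?_ le_rfl)
    intro x hx
    rcases exists_nat_gt x with ⟨n, hn⟩
    exact Set.mem_iUnion.2 ⟨n, le_of_lt hx, by linarith⟩
  obtain ⟨g, hgsm, hgu⟩ : ∃ g : ℝ → ℝ, StronglyMeasurable g ∧ u' =ᵐ[μ] g :=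
    ⟨hu'm.mk u', hu'm.stronglyMeasurable_mk, hu'm.ae_eq_mk⟩
  have hgm : Measurable g := hgsm.measurable
  have hae : ∀ᵐ x ∂volume, x ∈ Set.Ioi (0:ℝ) →
      u' x = g x ∧ |u' x| ≤ M * Real.exp (lam0 * x) := by
    rw [← ae_restrict_iff' measurableSet_Ioi]
    exact hgu.and hu'b
  set E : Set ℝ := {x : ℝ | ¬ (x ∈ Set.Ioi (0:ℝ) →
      u' x = g x ∧ |u' x| ≤ M * Real.exp (lam0 * x))} with hEdef
  have hEnull : volume E = 0 := ae_iff.mp hae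
  have hEprop : ∀ x : ℝ, 0 < x → x ∉ E →
      u' x = g x ∧ |g x| ≤ M * Real.exp (lam0 * x) := by
    intro x hx hxE
    have h1 : x ∈ Set.Ioi (0:ℝ) → u' x = g x ∧ |u' x| ≤ M * Real.exp (lam0 * x) := by
      by_contra h; exact hxE h
    obtain ⟨h2, h3⟩ := h1 hx
    exact ⟨h2, h2 ▸ h3⟩
  have haeE : ∀ᵐ x ∂volume, x ∉ E := by
    rw [ae_iff]; simpa using hEnull
  have hgb : ∀ᵐ x ∂μ, |g x| ≤ M * Real.exp (lam0 * x) := by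
    rw [ae_restrict_iff' measurableSet_Ioi]
    filter_upwards [haeE] with x hx hx0
    exact (hEprop x hx0 hx).2
  have hgint : ∀ d : ℝ, 0 < d → IntegrableOn g (Set.Ioc 0 d) := by
    intro d hd
    refine ((hu'int d hd).mono_set Set.Ioc_subset_Icc_self).congr ?_
    rw [EventuallyEq, ae_restrict_iff' measurableSet_Ioc]
    filter_upwards [haeE] with x hx hmem
    exact (hEprop x hmem.1 hx).1
  have huACg : ∀ x : ℝ, 0 ≤ x → u x = u 0 + ∫ y in (0:ℝ)..x, g y := by
    intro x hx
    rw [huAC x hx]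
    congr 1
    apply intervalIntegral.integral_congr_ae
    filter_upwards [haeE] with y hy hymem
    rw [Set.uIoc_of_le hx] at hymem
    exact (hEprop y hymem.1 hy).1
  set m : ℝ → ℝ := fun s => a + (nb (Set.Ioi s)).toReal with hmdef
  have hmm : Measurable m := by
    refine measurable_const.add (Measurable.ennreal_toReal ?_)
    exact Antitone.measurable (fun s t h => measure_mono (Set.Ioi_subset_Ioi h))
  have hm0 : ∀ s, 0 ≤ m s := fun s => add_nonneg ha ENNReal.toReal_nonneg
  -- replace u', nt by g, m in the LHS
  have hLHS : ∫ t in Set.Ioi (0:ℝ),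
        Real.exp (-(l * t)) * (b * u' t + ∫ s in (0:ℝ)..t, u' (t - s) * nt s)
      = ∫ t in Set.Ioi (0:ℝ),
        Real.exp (-(l * t)) * (b * g t + ∫ s in (0:ℝ)..t, g (t - s) * m s) := by
    apply setIntegral_congr_ae measurableSet_Ioi
    filter_upwards [haeE] with t htE ht
    have h1 : u' t = g t := (hEprop t ht htE).1
    have h2 : ∫ s in (0:ℝ)..t, u' (t - s) * nt s = ∫ s in (0:ℝ)..t, g (t - s) * m s := by
      apply intervalIntegral.integral_congr_ae
      have hrefl : ∀ᵐ s ∂volume, s ∉ (fun s : ℝ => t - s) ⁻¹' E := by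
        rw [ae_iff]
        simpa [Set.preimage] using nullReflect hEnull t
      have hne : ∀ᵐ s : ℝ ∂volume, s ≠ t := by
        rw [ae_iff]
        simpa using measure_singleton (μ := (volume : Measure ℝ)) t
      filter_upwards [hrefl, hne] with s hsE hst hsmem
      rw [Set.uIoc_of_le (le_of_lt ht)] at hsmem
      have hts : 0 < t - s := sub_pos.mpr (lt_of_le_of_ne hsmem.2 hst)
      rw [(hEprop (t - s) hts hsE).1, hnt s hsmem.1, hmdef]
    rw [h1, h2]
  rw [hLHS]
  set Lu : ℝ := ∫ t in Set.Ioi (0:ℝ), Real.exp (-(l * t)) * u t with hLu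
  set Lg : ℝ := ∫ t in Set.Ioi (0:ℝ), Real.exp (-(l * t)) * g t with hLg
  set Im : ℝ := ∫ s in Set.Ioi (0:ℝ), Real.exp (-(l * s)) * m s with hIm
  ---------------------------------------------------------------- S1
  have hfin : ∀ ε : ℝ, 0 < ε → nb (Set.Ioi ε) ≠ ⊤ := by
    intro ε hε htop
    have h1 : ENNReal.ofReal (min ε 1) * nb (Set.Ioi ε)
        ≤ ∫⁻ s in Set.Ioi ε, ENNReal.ofReal (min s 1) ∂nb := by
      rw [← setLIntegral_const]
      refine setLIntegral_mono ((measurable_id.min measurable_const).ennreal_ofReal) ?_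
      intro x hx
      exact ENNReal.ofReal_le_ofReal (min_le_min (le_of_lt hx) le_rfl)
    have h2 : ∫⁻ s in Set.Ioi ε, ENNReal.ofReal (min s 1) ∂nb
        ≤ ∫⁻ s in Set.Ioi (0:ℝ), ENNReal.ofReal (min s 1) ∂nb :=
      lintegral_mono_set (Set.Ioi_subset_Ioi (le_of_lt hε))
    rw [htop, ENNReal.mul_top (by
      simp only [ne_eq, ENNReal.ofReal_eq_zero, not_le]
      exact lt_min hε one_pos)] at h1
    exact hint (top_le_iff.mp (h1.trans h2))
  haveI hsf : SigmaFinite (nb.restrict (Set.Ioi (0:ℝ))) := by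
    apply Measure.sigmaFinite_of_countable
      (S := Set.range (fun n : ℕ => Set.Ioi (1/(n+1) : ℝ) ∪ Set.Iic 0))
      (Set.countable_range _)
    · rintro s ⟨n, rfl⟩
      rw [Measure.restrict_apply (measurableSet_Ioi.union measurableSet_Iic)]
      refine lt_of_le_of_lt (measure_mono ?_)
        (lt_top_iff_ne_top.mpr (hfin (1/(n+1) : ℝ) (one_div_pos.mpr (by positivity))))
      rintro x ⟨hx1, hx2⟩
      rcases hx1 with h | h
      · exact h
      · exact absurd (Set.mem_Ioi.mp hx2) (not_lt.mpr h)
    · rw [Set.sUnion_range]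
      ext x; simp only [Set.mem_iUnion, Set.mem_univ, iff_true, Set.mem_union,
        Set.mem_Ioi, Set.mem_Iic]
      rcases le_or_gt x 0 with h | h
      · exact ⟨0, Or.inr h⟩
      · rcases exists_nat_one_div_lt h with ⟨n, hn⟩
        exact ⟨n, Or.inl hn⟩
  have keyA : ∫⁻ r in Set.Ioi (0:ℝ), ENNReal.ofReal (Real.exp (-(l * r))) * nb (Set.Ioi r)
      = ∫⁻ s in Set.Ioi (0:ℝ), ENNReal.ofReal ((1 - Real.exp (-(l * s))) / l) ∂nb := by
    have hFm : AEMeasurable (Function.uncurry (fun r s : ℝ =>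
        ENNReal.ofReal (Real.exp (-(l * r))) * Set.indicator (Set.Ioi r) (fun _ => (1:ℝ≥0∞)) s))
        ((volume.restrict (Set.Ioi (0:ℝ))).prod (nb.restrict (Set.Ioi (0:ℝ)))) := by
      apply Measurable.aemeasurable
      have heq : Function.uncurry (fun r s : ℝ =>
          ENNReal.ofReal (Real.exp (-(l * r))) * Set.indicator (Set.Ioi r) (fun _ => (1:ℝ≥0∞)) s)
          = fun p : ℝ × ℝ => ENNReal.ofReal (Real.exp (-(l * p.1)))
              * Set.indicator {q : ℝ × ℝ | q.1 < q.2} (fun _ => (1:ℝ≥0∞)) p := by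
        funext p
        simp only [Function.uncurry, Set.indicator_apply, Set.mem_Ioi, Set.mem_setOf_eq]
      rw [heq]
      exact ((Real.continuous_exp.comp
        (continuous_const.mul continuous_fst).neg).measurable.ennreal_ofReal).mul
        (measurable_const.indicator (measurableSet_lt measurable_fst measurable_snd))
    calc ∫⁻ r in Set.Ioi (0:ℝ), ENNReal.ofReal (Real.exp (-(l * r))) * nb (Set.Ioi r)
        = ∫⁻ r in Set.Ioi (0:ℝ), ∫⁻ s in Set.Ioi (0:ℝ),
            ENNReal.ofReal (Real.exp (-(l * r)))
              * Set.indicator (Set.Ioi r) (fun _ => (1:ℝ≥0∞)) s ∂nb := by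
          refine setLIntegral_congr_fun measurableSet_Ioi (fun r hr => ?_)
          rw [lintegral_const_mul' _ _ ENNReal.ofReal_ne_top]
          congr 1
          rw [lintegral_indicator measurableSet_Ioi, setLIntegral_one,
            Measure.restrict_apply measurableSet_Ioi,
            Set.inter_eq_self_of_subset_left (Set.Ioi_subset_Ioi (le_of_lt hr))]
      _ = ∫⁻ s in Set.Ioi (0:ℝ), (∫⁻ r in Set.Ioi (0:ℝ),
            ENNReal.ofReal (Real.exp (-(l * r)))
              * Set.indicator (Set.Ioi r) (fun _ => (1:ℝ≥0∞)) s) ∂nb :=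
          lintegral_lintegral_swap hFm
      _ = ∫⁻ s in Set.Ioi (0:ℝ), ENNReal.ofReal ((1 - Real.exp (-(l * s))) / l) ∂nb := by
          refine setLIntegral_congr_fun measurableSet_Ioi (fun s hs => ?_)
          have h1 : ∀ r : ℝ, ENNReal.ofReal (Real.exp (-(l * r)))
              * Set.indicator (Set.Ioi r) (fun _ => (1:ℝ≥0∞)) s
              = Set.indicator (Set.Iio s) (fun r => ENNReal.ofReal (Real.exp (-(l * r)))) r := by
            intro r
            simp only [Set.indicator_apply, Set.mem_Ioi, Set.mem_Iio]
            by_cases h : r < s <;> simp [h]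
          simp only [h1]
          rw [lintegral_indicator measurableSet_Iio, Measure.restrict_restrict measurableSet_Iio,
            IooEq s, ← ofReal_integral_eq_lintegral_ofReal
            ((expIntOn hl0 0).mono_set Set.Ioo_subset_Ioi_self)
            (ae_of_all _ fun x => (Real.exp_pos _).le)]
          congr 1
          rw [← integral_Ioc_eq_integral_Ioo, ← intervalIntegral.integral_of_le (le_of_lt hs)]
          exact expIntIoc hl0.ne' s
  have hboundT : ∀ s : ℝ, 0 < s →
      (1 - Real.exp (-(l * s))) / l ≤ (max 1 (1/l)) * min s 1 := by
    intro s hs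
    have he1 : 1 - Real.exp (-(l * s)) ≤ l * s := by
      have := Real.add_one_le_exp (-(l * s)); linarith
    have he2 : 1 - Real.exp (-(l * s)) ≤ 1 := by
      have := (Real.exp_pos (-(l * s))).le; linarith
    rcases le_total s 1 with h | h
    · have h3 : (1 - Real.exp (-(l * s))) / l ≤ s := by
        rw [div_le_iff₀ hl0]
        calc 1 - Real.exp (-(l * s)) ≤ l * s := he1
          _ = s * l := by ring
      calc (1 - Real.exp (-(l * s))) / l ≤ s := h3
        _ = 1 * min s 1 := by rw [min_eq_left h]; ring
        _ ≤ max 1 (1/l) * min s 1 := by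
            apply mul_le_mul_of_nonneg_right (le_max_left _ _) (le_min hs.le one_pos.le)
    · have h3 : (1 - Real.exp (-(l * s))) / l ≤ 1/l := by gcongr
      calc (1 - Real.exp (-(l * s))) / l ≤ 1/l := h3
        _ ≤ max 1 (1/l) := le_max_right _ _
        _ = max 1 (1/l) * min s 1 := by rw [min_eq_right h, mul_one]
  have hT2 : ∫⁻ s in Set.Ioi (0:ℝ), ENNReal.ofReal ((1 - Real.exp (-(l * s))) / l) ∂nb ≠ ⊤ := by
    have h1 : ∫⁻ s in Set.Ioi (0:ℝ), ENNReal.ofReal ((1 - Real.exp (-(l * s))) / l) ∂nb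
        ≤ ∫⁻ s in Set.Ioi (0:ℝ),
            ENNReal.ofReal (max 1 (1/l)) * ENNReal.ofReal (min s 1) ∂nb := by
      refine setLIntegral_mono
        (measurable_const.mul ((measurable_id.min measurable_const).ennreal_ofReal)) ?_
      intro s hs
      rw [← ENNReal.ofReal_mul (le_trans zero_le_one (le_max_left _ _))]
      exact ENNReal.ofReal_le_ofReal (hboundT s hs)
    rw [lintegral_const_mul' _ _ ENNReal.ofReal_ne_top] at h1
    exact ne_top_of_le_ne_top (ENNReal.mul_ne_top ENNReal.ofReal_ne_top hint) h1
  have hmExpM : AEStronglyMeasurable (fun s : ℝ => Real.exp (-(l * s)) * m s) μ :=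
    (hexpm.mul hmm).aestronglyMeasurable
  have hLintM : ∫⁻ s in Set.Ioi (0:ℝ), ENNReal.ofReal (Real.exp (-(l * s)) * m s)
      = ENNReal.ofReal a * ENNReal.ofReal (1 / l)
        + ∫⁻ s in Set.Ioi (0:ℝ), ENNReal.ofReal ((1 - Real.exp (-(l * s))) / l) ∂nb := by
    have h1 : ∀ s ∈ Set.Ioi (0:ℝ), ENNReal.ofReal (Real.exp (-(l * s)) * m s)
        = ENNReal.ofReal a * ENNReal.ofReal (Real.exp (-(l * s)))
          + ENNReal.ofReal (Real.exp (-(l * s))) * nb (Set.Ioi s) := by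
      intro s hs
      have h2 : Real.exp (-(l * s)) * m s
          = a * Real.exp (-(l * s)) + Real.exp (-(l * s)) * (nb (Set.Ioi s)).toReal := by
        rw [hmdef]; ring
      rw [h2, ENNReal.ofReal_add (by positivity)
        (mul_nonneg (Real.exp_pos _).le ENNReal.toReal_nonneg),
        ENNReal.ofReal_mul ha, ENNReal.ofReal_mul (Real.exp_pos _).le,
        ENNReal.ofReal_toReal (hfin s hs)]
    rw [setLIntegral_congr_fun measurableSet_Ioi h1,
      lintegral_add_left (hexpm.ennreal_ofReal.const_mul _),
      keyA, lintegral_const_mul' _ _ ENNReal.ofReal_ne_top]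
    congr 2
    have := expLIntVal hl0 0
    simpa using this
  have hmnonneg : 0 ≤ᵐ[μ] (fun s : ℝ => Real.exp (-(l * s)) * m s) :=
    ae_of_all _ fun s => mul_nonneg (Real.exp_pos _).le (hm0 s)
  have hmInt : IntegrableOn (fun s => Real.exp (-(l * s)) * m s) (Set.Ioi (0:ℝ)) := by
    refine ⟨hmExpM, ?_⟩
    rw [hasFiniteIntegral_iff_ofReal hmnonneg, hLintM]
    exact lt_top_iff_ne_top.mpr (ENNReal.add_ne_top.mpr
      ⟨ENNReal.mul_ne_top ENNReal.ofReal_ne_top ENNReal.ofReal_ne_top, hT2⟩)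
  have hT2' : ∫⁻ s in Set.Ioi (0:ℝ), ENNReal.ofReal ((1 - Real.exp (-(l * s))) / l) ∂nb
      = ENNReal.ofReal (1/l)
        * ∫⁻ s in Set.Ioi (0:ℝ), ENNReal.ofReal (1 - Real.exp (-(l * s))) ∂nb := by
    rw [← lintegral_const_mul' _ _ ENNReal.ofReal_ne_top]
    refine setLIntegral_congr_fun measurableSet_Ioi (fun s hs => ?_)
    rw [← ENNReal.ofReal_mul (by positivity)]
    congr 1; ring
  have hRnonneg : ∀ s : ℝ, s ∈ Set.Ioi (0:ℝ) → 0 ≤ 1 - Real.exp (-(l * s)) := by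
    intro s hs
    have h4 : Real.exp (-(l * s)) ≤ 1 := by
      rw [Real.exp_le_one_iff]
      simp only [Set.mem_Ioi] at hs
      nlinarith
    linarith
  have hRfin : ∫⁻ s in Set.Ioi (0:ℝ), ENNReal.ofReal (1 - Real.exp (-(l * s))) ∂nb ≠ ⊤ := by
    intro htop
    rw [hT2', htop, ENNReal.mul_top (by
      simp only [ne_eq, ENNReal.ofReal_eq_zero, not_le]
      positivity)] at hT2
    exact hT2 rfl
  have hReq : ∫ s in Set.Ioi (0:ℝ), (1 - Real.exp (-(l * s))) ∂nb
      = (∫⁻ s in Set.Ioi (0:ℝ), ENNReal.ofReal (1 - Real.exp (-(l * s))) ∂nb).toReal := by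
    apply integral_eq_lintegral_of_nonneg_ae
    · rw [EventuallyLE, ae_restrict_iff' measurableSet_Ioi]
      exact ae_of_all _ fun s hs => hRnonneg s hs
    · exact (Continuous.stronglyMeasurable (continuous_const.sub
        (Real.continuous_exp.comp (continuous_const.mul continuous_id).neg))).aestronglyMeasurable
  have hImEq : l * Im = a + ∫ s in Set.Ioi (0:ℝ), (1 - Real.exp (-(l * s))) ∂nb := by
    rw [hIm, integral_eq_lintegral_of_nonneg_ae hmnonneg hmExpM, hLintM, hT2', hReq,
      ENNReal.toReal_add (ENNReal.mul_ne_top ENNReal.ofReal_ne_top ENNReal.ofReal_ne_top)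
        (ENNReal.mul_ne_top ENNReal.ofReal_ne_top hRfin),
      ENNReal.toReal_mul, ENNReal.toReal_mul, ENNReal.toReal_ofReal ha,
      ENNReal.toReal_ofReal (by positivity : (0:ℝ) ≤ 1/l)]
    field_simp
  ---------------------------------------------------------------- S2/S3
  have hexpprod : ∀ t : ℝ, Real.exp (-(l * t)) * Real.exp (lam0 * t)
      = Real.exp (-((l - lam0) * t)) := by
    intro t; rw [← Real.exp_add]; congr 1; ring
  have hgInt : IntegrableOn (fun t => Real.exp (-(l * t)) * g t) (Set.Ioi (0:ℝ)) := by
    refine Integrable.mono' ((expIntOn hll 0).const_mul M)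
      ((hexpm.mul hgm).aestronglyMeasurable) ?_
    filter_upwards [hgb] with t ht
    calc ‖Real.exp (-(l * t)) * g t‖ = Real.exp (-(l * t)) * |g t| := by
          rw [Real.norm_eq_abs, abs_mul, abs_of_pos (Real.exp_pos _)]
      _ ≤ Real.exp (-(l * t)) * (M * Real.exp (lam0 * t)) :=
          mul_le_mul_of_nonneg_left ht (Real.exp_pos _).le
      _ = M * (Real.exp (-(l * t)) * Real.exp (lam0 * t)) := by ring
      _ = M * Real.exp (-((l - lam0) * t)) := by rw [hexpprod]
  have hum : AEStronglyMeasurable u μ := by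
    have h1 : AEStronglyMeasurable u (volume.restrict (⋃ n : ℕ, Set.Icc (0:ℝ) (n+1))) := by
      rw [aestronglyMeasurable_iUnion_iff]
      intro n
      refine ContinuousOn.aestronglyMeasurable ?_ measurableSet_Icc
      have hcont : ContinuousOn (fun x => u 0 + ∫ t in Set.Ioc (0:ℝ) x, u' t)
          (Set.Icc (0:ℝ) (n+1)) :=
        continuousOn_const.add (intervalIntegral.continuousOn_primitive (hu'int (n+1) (by positivity)))
      refine hcont.congr fun x hx => ?_
      rw [huAC x hx.1, intervalIntegral.integral_of_le hx.1]
    refine h1.mono_measure (Measure.restrict_mono ?_ le_rfl)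
    intro x hx
    rcases exists_nat_gt x with ⟨n, hn⟩
    exact Set.mem_iUnion.2 ⟨n, le_of_lt hx, by linarith⟩
  have huInt : IntegrableOn (fun t => Real.exp (-(l * t)) * u t) (Set.Ioi (0:ℝ)) := by
    refine Integrable.mono' ((expIntOn hll 0).const_mul M)
      ((hexpm.aestronglyMeasurable.mono_measure le_rfl).mul hum) ?_
    rw [ae_restrict_iff' measurableSet_Ioi]
    refine ae_of_all _ fun t ht => ?_
    calc ‖Real.exp (-(l * t)) * u t‖ = Real.exp (-(l * t)) * |u t| := by
          rw [Real.norm_eq_abs, abs_mul, abs_of_pos (Real.exp_pos _)]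
      _ ≤ Real.exp (-(l * t)) * (M * Real.exp (lam0 * t)) :=
          mul_le_mul_of_nonneg_left (hub t (le_of_lt ht)) (Real.exp_pos _).le
      _ = M * (Real.exp (-(l * t)) * Real.exp (lam0 * t)) := by ring
      _ = M * Real.exp (-((l - lam0) * t)) := by rw [hexpprod]
  ---------------------------------------------------------------- S4
  set H : ℝ → ℝ → ℝ := fun t y => if y < t then Real.exp (-(l * t)) * g y else 0 with hHdef
  have hHm : AEStronglyMeasurable (Function.uncurry H) (μ.prod μ) := by
    have heq : Function.uncurry H = Set.indicator {p : ℝ × ℝ | p.2 < p.1}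
        (fun p => Real.exp (-(l * p.1)) * g p.2) := by
      funext p
      simp only [Function.uncurry, Set.indicator_apply, Set.mem_setOf_eq, hHdef]
    rw [heq]
    exact (Measurable.indicator ((hexpm.comp measurable_fst).mul (hgm.comp measurable_snd))
      (measurableSet_lt measurable_snd measurable_fst)).aestronglyMeasurable
  have hHslice : ∀ t : ℝ, 0 < t → Integrable (fun y => H t y) μ := by
    intro t ht
    have h1 : (fun y => H t y)
        = Set.indicator (Set.Iio t) (fun y => Real.exp (-(l * t)) * g y) := by
      funext y; simp only [hHdef, Set.indicator_apply, Set.mem_Iio]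
    rw [h1, integrable_indicator_iff measurableSet_Iio, IntegrableOn,
      Measure.restrict_restrict measurableSet_Iio, IooEq t]
    exact ((hgint t ht).mono_set Set.Ioo_subset_Ioc_self).const_mul _
  have hexpIoo : ∀ t : ℝ, 0 < t →
      ∫ y in Set.Ioo (0:ℝ) t, Real.exp (lam0 * y) = (Real.exp (lam0 * t) - 1) / lam0 := by
    intro t ht
    rw [← integral_Ioc_eq_integral_Ioo, ← intervalIntegral.integral_of_le ht.le]
    exact expIntIocPos hlam0.ne' t
  have hexpIooInt : ∀ t : ℝ, IntegrableOn (fun y => Real.exp (lam0 * y)) (Set.Ioo (0:ℝ) t) := by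
    intro t
    exact ((Real.continuous_exp.comp
      (continuous_const.mul continuous_id)).integrableOn_Icc).mono_set Set.Ioo_subset_Icc_self
  have hHnormbound : ∀ t : ℝ, 0 < t →
      (∫ y, ‖H t y‖ ∂μ) ≤ (M / lam0) * Real.exp (-((l - lam0) * t)) := by
    intro t ht
    have h1 : ∀ y : ℝ, ‖H t y‖
        = Set.indicator (Set.Iio t) (fun y => |Real.exp (-(l * t)) * g y|) y := by
      intro y
      simp only [hHdef, Set.indicator_apply, Set.mem_Iio, Real.norm_eq_abs]
      by_cases h : y < t <;> simp [h]
    have h2 : (∫ y, ‖H t y‖ ∂μ) = ∫ y in Set.Ioo 0 t, |Real.exp (-(l * t)) * g y| := by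
      simp only [h1]
      rw [integral_indicator measurableSet_Iio,
        Measure.restrict_restrict measurableSet_Iio, IooEq t]
    have hInt1 : IntegrableOn (fun y => |Real.exp (-(l * t)) * g y|) (Set.Ioo 0 t) :=
      (((hgint t ht).mono_set Set.Ioo_subset_Ioc_self).const_mul _).abs
    have hInt2 : IntegrableOn (fun y => Real.exp (-(l * t)) * (M * Real.exp (lam0 * y)))
        (Set.Ioo 0 t) := ((hexpIooInt t).const_mul M).const_mul _
    have hae2 : ∀ᵐ y ∂(volume.restrict (Set.Ioo (0:ℝ) t)),
        |Real.exp (-(l * t)) * g y| ≤ Real.exp (-(l * t)) * (M * Real.exp (lam0 * y)) := by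
      rw [ae_restrict_iff' measurableSet_Ioo]
      filter_upwards [haeE] with y hy hmem
      rw [abs_mul, abs_of_pos (Real.exp_pos _)]
      exact mul_le_mul_of_nonneg_left (hEprop y hmem.1 hy).2 (Real.exp_pos _).le
    rw [h2]
    calc ∫ y in Set.Ioo 0 t, |Real.exp (-(l * t)) * g y|
        ≤ ∫ y in Set.Ioo 0 t, Real.exp (-(l * t)) * (M * Real.exp (lam0 * y)) :=
          integral_mono_ae hInt1 hInt2 hae2
      _ = Real.exp (-(l * t)) * (M * ((Real.exp (lam0 * t) - 1) / lam0)) := by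
          rw [integral_const_mul, integral_const_mul, hexpIoo t ht]
      _ ≤ Real.exp (-(l * t)) * (M * (Real.exp (lam0 * t) / lam0)) := by
          have : (Real.exp (lam0 * t) - 1) / lam0 ≤ Real.exp (lam0 * t) / lam0 :=
            (div_le_div_iff_of_pos_right hlam0).mpr (by linarith)
          exact mul_le_mul_of_nonneg_left
            (mul_le_mul_of_nonneg_left this hM.le) (Real.exp_pos _).le
      _ = (M / lam0) * (Real.exp (-(l * t)) * Real.exp (lam0 * t)) := by ring
      _ = (M / lam0) * Real.exp (-((l - lam0) * t)) := by rw [hexpprod]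
  have hHint : Integrable (Function.uncurry H) (μ.prod μ) := by
    rw [integrable_prod_iff hHm]
    constructor
    · rw [ae_restrict_iff' measurableSet_Ioi]
      exact ae_of_all _ fun t ht => hHslice t ht
    · refine Integrable.mono' ((expIntOn hll 0).const_mul (M/lam0))
        (hHm.norm.integral_prod_right') ?_
      rw [ae_restrict_iff' measurableSet_Ioi]
      refine ae_of_all _ fun t ht => ?_
      rw [Real.norm_eq_abs, abs_of_nonneg (integral_nonneg fun y => norm_nonneg _)]
      exact hHnormbound t ht
  have hswapH : ∫ t, (∫ y, H t y ∂μ) ∂μ = ∫ y, (∫ t, H t y ∂μ) ∂μ :=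
    integral_integral_swap hHint
  have hLHSH : ∫ t, (∫ y, H t y ∂μ) ∂μ = Lu - u 0 * (1/l) := by
    have h1 : ∀ t ∈ Set.Ioi (0:ℝ), (∫ y, H t y ∂μ)
        = Real.exp (-(l * t)) * u t - Real.exp (-(l * t)) * u 0 := by
      intro t ht
      have h2 : (fun y => H t y)
          = Set.indicator (Set.Iio t) (fun y => Real.exp (-(l * t)) * g y) := by
        funext y; simp only [hHdef, Set.indicator_apply, Set.mem_Iio]
      rw [h2, integral_indicator measurableSet_Iio,
        Measure.restrict_restrict measurableSet_Iio, IooEq t, integral_const_mul,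
        ← integral_Ioc_eq_integral_Ioo, ← intervalIntegral.integral_of_le (le_of_lt ht)]
      have h3 := huACg t (le_of_lt ht)
      have h4 : ∫ y in (0:ℝ)..t, g y = u t - u 0 := by linarith
      rw [h4]; ring
    rw [setIntegral_congr_ae measurableSet_Ioi (ae_of_all _ h1),
      integral_sub huInt ((expIntOn hl0 0).mul_const (u 0)), integral_mul_const]
    have h5 := expIntVal hl0 0
    simp only [mul_zero, neg_zero, Real.exp_zero] at h5
    rw [h5, ← hLu]
    ring
  have hRHSH : ∫ y, (∫ t, H t y ∂μ) ∂μ = Lg * (1/l) := by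
    have h1 : ∀ y ∈ Set.Ioi (0:ℝ), (∫ t, H t y ∂μ)
        = (Real.exp (-(l * y)) * g y) * (1/l) := by
      intro y hy
      have h2 : (fun t => H t y)
          = Set.indicator (Set.Ioi y) (fun t => Real.exp (-(l * t)) * g y) := by
        funext t; simp only [hHdef, Set.indicator_apply, Set.mem_Ioi]
      rw [h2, integral_indicator measurableSet_Ioi,
        Measure.restrict_restrict measurableSet_Ioi,
        Set.inter_eq_self_of_subset_left (Set.Ioi_subset_Ioi (le_of_lt hy)),
        integral_mul_const, expIntVal hl0 y]
      ring
    rw [setIntegral_congr_ae measurableSet_Ioi (ae_of_all _ h1), integral_mul_const, ← hLg]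
  have hLgLu : Lg = l * Lu - u 0 := by
    have h6 : Lu - u 0 * (1/l) = Lg * (1/l) := by rw [← hLHSH, ← hRHSH]; exact hswapH
    field_simp at h6
    linarith
  ---------------------------------------------------------------- S5/S6
  set K : ℝ → ℝ → ℝ :=
    fun t s => if s < t then Real.exp (-(l * t)) * (g (t - s) * m s) else 0 with hKdef
  have hKm : AEStronglyMeasurable (Function.uncurry K) (μ.prod μ) := by
    have heq : Function.uncurry K = Set.indicator {p : ℝ × ℝ | p.2 < p.1}
        (fun p => Real.exp (-(l * p.1)) * (g (p.1 - p.2) * m p.2)) := by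
      funext p
      simp only [Function.uncurry, Set.indicator_apply, Set.mem_setOf_eq, hKdef]
    rw [heq]
    exact (Measurable.indicator ((hexpm.comp measurable_fst).mul
      ((hgm.comp (measurable_fst.sub measurable_snd)).mul (hmm.comp measurable_snd)))
      (measurableSet_lt measurable_snd measurable_fst)).aestronglyMeasurable
  set B : ℝ × ℝ → ℝ := Set.indicator {p : ℝ × ℝ | p.2 < p.1}
    (fun p => M * Real.exp (-(l * p.1)) * Real.exp (lam0 * (p.1 - p.2)) * m p.2) with hBdef
  have hBmeas : Measurable B := by
    refine Measurable.indicator ?_ (measurableSet_lt measurable_snd measurable_fst)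
    exact (((measurable_const.mul (hexpm.comp measurable_fst)).mul
      ((Real.continuous_exp.comp (continuous_const.mul
        (continuous_fst.sub continuous_snd))).measurable)).mul (hmm.comp measurable_snd))
  have hKbound : ∀ᵐ p ∂(μ.prod μ), ‖Function.uncurry K p‖ ≤ B p := by
    filter_upwards [nullProd hEnull] with p hp
    by_cases h : p.2 < p.1
    · have hts : 0 < p.1 - p.2 := sub_pos.mpr h
      have hgb2 : |g (p.1 - p.2)| ≤ M * Real.exp (lam0 * (p.1 - p.2)) := (hEprop _ hts hp).2
      simp only [Function.uncurry, hKdef, hBdef, Set.indicator_apply, Set.mem_setOf_eq,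
        h, if_true, Real.norm_eq_abs]
      calc |Real.exp (-(l * p.1)) * (g (p.1 - p.2) * m p.2)|
          = Real.exp (-(l * p.1)) * (|g (p.1 - p.2)| * m p.2) := by
            rw [abs_mul, abs_mul, abs_of_pos (Real.exp_pos _), abs_of_nonneg (hm0 _)]
        _ ≤ Real.exp (-(l * p.1)) * ((M * Real.exp (lam0 * (p.1 - p.2))) * m p.2) :=
            mul_le_mul_of_nonneg_left
              (mul_le_mul_of_nonneg_right hgb2 (hm0 _)) (Real.exp_pos _).le
        _ = M * Real.exp (-(l * p.1)) * Real.exp (lam0 * (p.1 - p.2)) * m p.2 := by ring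
    · simp only [Function.uncurry, hKdef, hBdef, Set.indicator_apply, Set.mem_setOf_eq,
        h, if_false, norm_zero]
      simp [h]
  have hBlint : ∫⁻ p, ENNReal.ofReal (B p) ∂(μ.prod μ) < ⊤ := by
    rw [lintegral_prod_symm _ (hBmeas.ennreal_ofReal.aemeasurable)]
    have h1 : ∀ s ∈ Set.Ioi (0:ℝ), (∫⁻ t, ENNReal.ofReal (B (t, s)) ∂μ)
        = ENNReal.ofReal (M / (l - lam0)) * ENNReal.ofReal (Real.exp (-(l * s)) * m s) := by
      intro s hs
      have h2 : ∀ t : ℝ, ENNReal.ofReal (B (t, s)) = Set.indicator (Set.Ioi s)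
          (fun t => ENNReal.ofReal ((M * Real.exp (-(lam0 * s)) * m s)
            * Real.exp (-((l - lam0) * t)))) t := by
        intro t
        simp only [hBdef, Set.indicator_apply, Set.mem_setOf_eq, Set.mem_Ioi]
        by_cases h : s < t
        · simp only [h, if_true]
          congr 1
          rw [show lam0 * (t - s) = -(lam0 * s) + lam0 * t by ring, Real.exp_add,
            show -((l - lam0) * t) = -(l * t) + lam0 * t by ring, Real.exp_add]
          ring
        · simp [h]
      simp only [h2]
      rw [lintegral_indicator measurableSet_Ioi,
        Measure.restrict_restrict measurableSet_Ioi,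
        Set.inter_eq_self_of_subset_left (Set.Ioi_subset_Ioi (le_of_lt hs))]
      have h3 : ∀ t : ℝ, ENNReal.ofReal ((M * Real.exp (-(lam0 * s)) * m s)
            * Real.exp (-((l - lam0) * t)))
          = ENNReal.ofReal (M * Real.exp (-(lam0 * s)) * m s)
            * ENNReal.ofReal (Real.exp (-((l - lam0) * t))) := by
        intro t
        rw [← ENNReal.ofReal_mul (mul_nonneg (mul_nonneg hM.le (Real.exp_pos _).le) (hm0 s))]
      simp only [h3]
      rw [lintegral_const_mul' _ _ ENNReal.ofReal_ne_top, expLIntVal hll s,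
        ← ENNReal.ofReal_mul (mul_nonneg (mul_nonneg hM.le (Real.exp_pos _).le) (hm0 s)),
        ← ENNReal.ofReal_mul (by positivity : (0:ℝ) ≤ M / (l - lam0))]
      congr 1
      have h5 : Real.exp (-(lam0 * s)) * Real.exp (-((l - lam0) * s)) = Real.exp (-(l * s)) := by
        rw [← Real.exp_add]; congr 1; ring
      have h6 : M * Real.exp (-(lam0 * s)) * m s * (Real.exp (-((l - lam0) * s)) / (l - lam0))
          = M / (l - lam0) * (Real.exp (-(lam0 * s)) * Real.exp (-((l - lam0) * s)) * m s) := by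
        ring
      rw [h6, h5]
    rw [setLIntegral_congr_fun measurableSet_Ioi h1,
      lintegral_const_mul' _ _ ENNReal.ofReal_ne_top]
    refine ENNReal.mul_lt_top (by simp) ?_
    rw [← hasFiniteIntegral_iff_ofReal hmnonneg]
    exact hmInt.2
  have hKint : Integrable (Function.uncurry K) (μ.prod μ) := by
    refine ⟨hKm, ?_⟩
    rw [hasFiniteIntegral_iff_norm]
    calc ∫⁻ p, ENNReal.ofReal ‖Function.uncurry K p‖ ∂(μ.prod μ)
        ≤ ∫⁻ p, ENNReal.ofReal (B p) ∂(μ.prod μ) :=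
          lintegral_mono_ae (hKbound.mono fun p hp => ENNReal.ofReal_le_ofReal hp)
      _ < ⊤ := hBlint
  have hconvEq : ∀ᵐ t ∂μ, Real.exp (-(l * t)) * (∫ s in (0:ℝ)..t, g (t - s) * m s)
      = ∫ s, K t s ∂μ := by
    rw [ae_restrict_iff' measurableSet_Ioi]
    refine ae_of_all _ fun t ht => ?_
    have h2 : (fun s => K t s)
        = Set.indicator (Set.Iio t) (fun s => Real.exp (-(l * t)) * (g (t - s) * m s)) := by
      funext s; simp only [hKdef, Set.indicator_apply, Set.mem_Iio]
    rw [h2, integral_indicator measurableSet_Iio,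
      Measure.restrict_restrict measurableSet_Iio, IooEq t, integral_const_mul,
      ← integral_Ioc_eq_integral_Ioo, ← intervalIntegral.integral_of_le (le_of_lt ht)]
  have hconvInt : Integrable
      (fun t => Real.exp (-(l * t)) * (∫ s in (0:ℝ)..t, g (t - s) * m s)) μ := by
    refine (hKint.integral_prod_left).congr ?_
    filter_upwards [hconvEq] with t ht
    exact ht.symm
  have hconvVal : ∫ t in Set.Ioi (0:ℝ),
      Real.exp (-(l * t)) * (∫ s in (0:ℝ)..t, g (t - s) * m s) = Lg * Im := by
    have hswapK : ∫ t, (∫ s, K t s ∂μ) ∂μ = ∫ s, (∫ t, K t s ∂μ) ∂μ :=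
      integral_integral_swap hKint
    calc ∫ t in Set.Ioi (0:ℝ), Real.exp (-(l * t)) * (∫ s in (0:ℝ)..t, g (t - s) * m s)
        = ∫ t, (∫ s, K t s ∂μ) ∂μ := integral_congr_ae hconvEq
      _ = ∫ s, (∫ t, K t s ∂μ) ∂μ := hswapK
      _ = ∫ s in Set.Ioi (0:ℝ), (Real.exp (-(l * s)) * m s) * Lg := by
          refine setIntegral_congr_ae measurableSet_Ioi (ae_of_all _ fun s hs => ?_)
          have h2 : (fun t => K t s) = Set.indicator (Set.Ioi s)
              (fun t => Real.exp (-(l * t)) * (g (t - s) * m s)) := by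
            funext t; simp only [hKdef, Set.indicator_apply, Set.mem_Ioi]
          rw [h2, integral_indicator measurableSet_Ioi,
            Measure.restrict_restrict measurableSet_Ioi,
            Set.inter_eq_self_of_subset_left (Set.Ioi_subset_Ioi (le_of_lt hs)),
            ← integral_indicator measurableSet_Ioi]
          have h3 : ∀ x : ℝ, Set.indicator (Set.Ioi s)
              (fun t => Real.exp (-(l * t)) * (g (t - s) * m s)) x
              = Set.indicator (Set.Ioi (0:ℝ))
                  (fun r => Real.exp (-(l * (r + s))) * (g r * m s)) (x - s) := by
            intro x
            simp only [Set.indicator_apply, Set.mem_Ioi, sub_pos]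
            by_cases h : s < x
            · simp only [h, if_true]
              rw [sub_add_cancel]
            · simp [h]
          simp only [h3]
          rw [integral_sub_right_eq_self (fun x => Set.indicator (Set.Ioi (0:ℝ))
            (fun r => Real.exp (-(l * (r + s))) * (g r * m s)) x) s,
            integral_indicator measurableSet_Ioi]
          have h4 : ∀ r : ℝ, Real.exp (-(l * (r + s))) * (g r * m s)
              = (Real.exp (-(l * s)) * m s) * (Real.exp (-(l * r)) * g r) := by
            intro r
            rw [show -(l * (r + s)) = -(l * r) + -(l * s) by ring, Real.exp_add]
            ring
          simp only [h4]
          rw [integral_const_mul, ← hLg]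
      _ = Lg * Im := by
          rw [integral_mul_const, hIm, mul_comm]
  ---------------------------------------------------------------- final
  have hfrac : b + Im = f l / l := by
    have h1 : f l = b * l + l * Im := by
      rw [hf l hl0]; linarith [hImEq]
    field_simp
    linarith [h1]
  have hsplit : ∫ t in Set.Ioi (0:ℝ),
        Real.exp (-(l * t)) * (b * g t + ∫ s in (0:ℝ)..t, g (t - s) * m s)
      = b * Lg + Lg * Im := by
    have h1 : ∀ t : ℝ, Real.exp (-(l * t)) * (b * g t + ∫ s in (0:ℝ)..t, g (t - s) * m s)
        = b * (Real.exp (-(l * t)) * g t)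
          + Real.exp (-(l * t)) * (∫ s in (0:ℝ)..t, g (t - s) * m s) := by
      intro t; ring
    simp only [h1]
    rw [integral_add (hgInt.const_mul b) hconvInt, integral_const_mul, hconvVal, ← hLg]
  rw [hsplit]
  have h9 : b * Lg + Lg * Im = Lg * (b + Im) := by ring
  rw [h9, hfrac, hLgLu]
  field_simp
end

section
/- Let 0 < c ≤ d < ∞, let u be absolutely continuous on [c,d], and assume s ↦ ν(s) is absolutely continuous on (0,∞). Then the function t ↦ b u(t) + ∫₀^{t−c} u(t−s) ν(s) ds is differentiable almost everywhere on [c,d] and, for almost every t ∈ [c,d], (d/dt)[ b u(t) + ∫₀^{t−c} u(t−s) ν(s) ds ] = b u′(t) + ∫₀^{t−c} u′(t−s) ν(s) ds + ν(t−c) u(c). -/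
open MeasureTheory Set Real Filter Metric Topology
open scoped ENNReal NNReal

section Aux

lemma ae_hasDerivAt_primitive (f : ℝ → ℝ) (hf : Integrable f) (c : ℝ) :
    ∀ᵐ x : ℝ, HasDerivAt (fun y => ∫ t in c..y, f t) (f x) x := by
  have H : ∀ᵐ x : ℝ, Tendsto (fun r : ℝ => ⨍ y in closedBall x r, ‖f y - f x‖) (𝓝[>] 0) (𝓝 0) := by
    filter_upwards [(Besicovitch.vitaliFamily (volume : Measure ℝ)).ae_tendsto_average_norm_sub
      hf.locallyIntegrable] with x hx
    exact hx.comp (Besicovitch.tendsto_filterAt volume x)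
  filter_upwards [H] with x hx
  rw [hasDerivAt_iff_isLittleO, Asymptotics.isLittleO_iff]
  intro ε hε
  have hε2 : (0:ℝ) < ε / 4 := by linarith
  obtain ⟨δ, hδ, hδ'⟩ := (Metric.tendsto_nhdsWithin_nhds.1 hx) (ε/4) hε2
  have key : ∀ y : ℝ, y ≠ x → |y - x| < δ →
      ‖(∫ t in c..y, f t) - (∫ t in c..x, f t) - (y - x) * f x‖ ≤ ε * ‖y - x‖ := by
    intro y hy hyδ
    set r := |y - x| with hr
    have hr0 : 0 < r := abs_pos.2 (sub_ne_zero.2 hy)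
    have h1 : (∫ t in c..y, f t) - (∫ t in c..x, f t) = ∫ t in x..y, f t := by
      rw [← intervalIntegral.integral_add_adjacent_intervals (a := c) (b := x) (c := y)
        (hf.intervalIntegrable) (hf.intervalIntegrable)]
      ring
    have h2 : (∫ t in x..y, f t) - (y - x) * f x = ∫ t in x..y, (f t - f x) := by
      rw [intervalIntegral.integral_sub (hf.intervalIntegrable)
        (intervalIntegrable_const), intervalIntegral.integral_const, smul_eq_mul]
    rw [h1, h2]
    have h3 : ‖∫ t in x..y, (f t - f x)‖ ≤ ∫ t in Set.uIoc x y, ‖f t - f x‖ :=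
      intervalIntegral.norm_integral_le_integral_norm_uIoc
    have hsub : Set.uIoc x y ⊆ closedBall x r := by
      intro t ht
      rw [mem_closedBall, Real.dist_eq]
      rcases le_total x y with h | h
      · rw [uIoc_of_le h] at ht
        have h4 : x - y ≤ 0 := by linarith
        rw [hr, abs_of_nonneg (by linarith : (0:ℝ) ≤ y - x)]
        rw [abs_le]; constructor <;> [linarith [ht.1]; linarith [ht.2]]
      · rw [uIoc_of_ge h] at ht
        rw [hr, abs_of_nonpos (by linarith : y - x ≤ 0)]
        rw [abs_le]; constructor <;> [linarith [ht.1]; linarith [ht.2]]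
    have hint : IntegrableOn (fun t => ‖f t - f x‖) (closedBall x r) := by
      exact ((hf.integrableOn.sub (integrableOn_const measure_closedBall_lt_top.ne)).norm)
    have h5 : ∫ t in Set.uIoc x y, ‖f t - f x‖ ≤ ∫ t in closedBall x r, ‖f t - f x‖ := by
      apply setIntegral_mono_set hint
      · exact Eventually.of_forall fun t => norm_nonneg _
      · exact HasSubset.Subset.eventuallyLE hsub
    have hvol : (volume (closedBall x r)).toReal = 2 * r := by
      rw [Real.volume_closedBall, ENNReal.toReal_ofReal (by linarith)]
    have h6 : ∫ t in closedBall x r, ‖f t - f x‖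
        = (volume (closedBall x r)).toReal * ⨍ t in closedBall x r, ‖f t - f x‖ := by
      rw [setAverage_eq, smul_eq_mul, measureReal_def, ← mul_assoc, mul_inv_cancel₀, one_mul]
      rw [hvol]; positivity
    have havg : ⨍ t in closedBall x r, ‖f t - f x‖ ≤ ε / 4 := by
      have := hδ' (mem_Ioi.2 hr0) (by rwa [Real.dist_eq, sub_zero, abs_of_pos hr0])
      rw [Real.dist_eq, sub_zero] at this
      calc ⨍ t in closedBall x r, ‖f t - f x‖ ≤ |⨍ t in closedBall x r, ‖f t - f x‖| := le_abs_self _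
        _ ≤ ε / 4 := le_of_lt this
    calc ‖∫ t in x..y, (f t - f x)‖ ≤ ∫ t in closedBall x r, ‖f t - f x‖ := h3.trans h5
      _ = (2 * r) * ⨍ t in closedBall x r, ‖f t - f x‖ := by rw [h6, hvol]
      _ ≤ (2 * r) * (ε / 4) := by
          apply mul_le_mul_of_nonneg_left havg (by linarith)
      _ ≤ ε * ‖y - x‖ := by rw [Real.norm_eq_abs, ← hr]; nlinarith
  have hball : Metric.ball x δ ∈ 𝓝 x := Metric.ball_mem_nhds x hδ
  filter_upwards [hball] with y hy
  rcases eq_or_ne y x with rfl | hne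
  · simp
  · have : |y - x| < δ := by rwa [mem_ball, Real.dist_eq] at hy
    simpa using key y hne this


lemma m_int (a : ℝ) (ha : 0 ≤ a) (nb : Measure ℝ)
    (hint : ∫⁻ s in Set.Ioi (0 : ℝ), ENNReal.ofReal (min s 1) ∂nb ≠ ⊤) (X : ℝ) :
    IntegrableOn (fun x => a + (nb (Set.Ioi x)).toReal) (Set.Ioc 0 X) := by
  rcases le_or_gt X 0 with hX | hX
  · rw [Set.Ioc_eq_empty (by intro h; exact absurd (h.trans_le hX) (lt_irrefl 0))]
    exact integrableOn_empty
  have hmono : Antitone (fun x : ℝ => nb (Set.Ioi x)) :=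
    fun x y hxy => measure_mono (Set.Ioi_subset_Ioi hxy)
  have hmeas : Measurable (fun x : ℝ => a + (nb (Set.Ioi x)).toReal) :=
    measurable_const.add (ENNReal.measurable_toReal.comp hmono.measurable)
  constructor
  · exact hmeas.aestronglyMeasurable
  · -- finite integral
    show (∫⁻ x in Set.Ioc 0 X, (‖a + (nb (Set.Ioi x)).toReal‖₊ : ℝ≥0∞) ∂volume) < ⊤
    have hb : ∀ x ∈ Set.Ioc (0:ℝ) X, (‖a + (nb (Set.Ioi x)).toReal‖₊ : ℝ≥0∞)
        ≤ ENNReal.ofReal a + nb (Set.Ioi x) := by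
      intro x hx
      have h1 : (0:ℝ) ≤ a + (nb (Set.Ioi x)).toReal := by positivity
      rw [← enorm_eq_nnnorm, ← ofReal_norm, Real.norm_of_nonneg h1,
        ENNReal.ofReal_add ha ENNReal.toReal_nonneg]
      exact add_le_add_right ENNReal.ofReal_toReal_le _
    calc ∫⁻ x in Set.Ioc 0 X, (‖a + (nb (Set.Ioi x)).toReal‖₊ : ℝ≥0∞)
        ≤ ∫⁻ x in Set.Ioc 0 X, (ENNReal.ofReal a + nb (Set.Ioi x)) := by
          refine lintegral_mono_ae ?_
          filter_upwards [ae_restrict_mem measurableSet_Ioc] with x hx using hb x hx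
      _ = ENNReal.ofReal a * volume (Set.Ioc (0:ℝ) X) + ∫⁻ x in Set.Ioc 0 X, nb (Set.Ioi x) := by
          rw [lintegral_add_left measurable_const, setLIntegral_const, mul_comm]
      _ < ⊤ := by
          refine ENNReal.add_lt_top.2 ⟨?_, ?_⟩
          · exact ENNReal.mul_lt_top ENNReal.ofReal_lt_top (by simp [Real.volume_Ioc])
          · -- layer cake bound
            have key : ∫⁻ x in Set.Ioc 0 X, nb (Set.Ioi x)
                ≤ ENNReal.ofReal (max X 1) * ∫⁻ s in Set.Ioi (0:ℝ), ENNReal.ofReal (min s 1) ∂nb := by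
              set ν := nb.restrict (Set.Ioi (0:ℝ)) with hν
              have step1 : ∫⁻ x in Set.Ioc 0 X, nb (Set.Ioi x)
                  ≤ ∫⁻ t in Set.Ioi (0:ℝ), ν {y : ℝ | t ≤ min y X} := by
                refine le_trans ?_ (lintegral_mono_set (Set.Ioc_subset_Ioi_self : Set.Ioc (0:ℝ) X ⊆ Set.Ioi 0))
                refine lintegral_mono_ae ?_
                filter_upwards [ae_restrict_mem measurableSet_Ioc] with t ht
                have h2 : nb (Set.Ioi t) = ν (Set.Ioi t) := by
                  rw [hν, Measure.restrict_apply measurableSet_Ioi,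
                    Set.inter_eq_self_of_subset_left (Set.Ioi_subset_Ioi ht.1.le)]
                rw [h2]
                refine measure_mono fun y hy => ?_
                exact le_min (le_of_lt hy) ht.2
              have step2 : ∫⁻ t in Set.Ioi (0:ℝ), ν {y : ℝ | t ≤ min y X}
                  = ∫⁻ y, ENNReal.ofReal (min y X) ∂ν := by
                refine (lintegral_eq_lintegral_meas_le ν ?_ ?_).symm
                · filter_upwards [ae_restrict_mem measurableSet_Ioi] with y hy
                  exact le_min hy.le hX.le
                · exact ((continuous_id.min continuous_const).measurable).aemeasurable
              have step3 : ∫⁻ y, ENNReal.ofReal (min y X) ∂ν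
                  ≤ ENNReal.ofReal (max X 1) * ∫⁻ s in Set.Ioi (0:ℝ), ENNReal.ofReal (min s 1) ∂nb := by
                rw [hν, ← lintegral_const_mul' _ _ ENNReal.ofReal_ne_top]
                refine lintegral_mono_ae ?_
                filter_upwards [ae_restrict_mem measurableSet_Ioi] with y hy
                rw [← ENNReal.ofReal_mul (le_max_of_le_right zero_le_one)]
                refine ENNReal.ofReal_le_ofReal ?_
                rcases le_total y 1 with h1 | h1
                · have : min y X ≤ y := min_le_left _ _
                  have h2 : min y 1 = y := min_eq_left h1
                  rw [h2]; nlinarith [le_max_right X 1, (Set.mem_Ioi.1 hy).le, le_max_left X 1, min_le_left y X]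
                · have h2 : min y 1 = 1 := min_eq_right h1
                  rw [h2, mul_one]
                  exact le_trans (min_le_right _ _) (le_max_left _ _)
              exact step1.trans (step2.le.trans step3)
            exact lt_of_le_of_lt key (ENNReal.mul_lt_top ENNReal.ofReal_lt_top hint.lt_top)


end Aux

/-- Let `0 < c ≤ d < ∞`, let `u` be absolutely continuous on `[c,d]`, and
assume the Lévy tail `ν(s) = a + ν̄((s,∞))` is absolutely continuous on `(0,∞)`. Then
`t ↦ b u(t) + ∫₀^{t−c} u(t−s) ν(s) ds` is differentiable almost everywhere on `[c,d]`
and for almost every `t ∈ [c,d]`,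
`(d/dt)[ b u(t) + ∫₀^{t−c} u(t−s) ν(s) ds ]
  = b u′(t) + ∫₀^{t−c} u′(t−s) ν(s) ds + ν(t−c) u(c)`. -/
theorem riemann_liouville_eq_caputo_plus_boundary
    (a b : ℝ) (ha : 0 ≤ a) (hb : 0 ≤ b)
    (nb : Measure ℝ)
    (hint : ∫⁻ s in Set.Ioi (0 : ℝ), ENNReal.ofReal (min s 1) ∂nb ≠ ⊤)
    (nt : ℝ → ℝ)
    (hnt : ∀ s : ℝ, 0 < s → nt s = a + (nb (Set.Ioi s)).toReal)
    -- `s ↦ ν(s)` is absolutely continuous on `(0,∞)` with derivative `nt'`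
    (nt' : ℝ → ℝ)
    (hnt'int : ∀ s1 s2 : ℝ, 0 < s1 → IntegrableOn nt' (Set.Icc s1 s2))
    (hntAC : ∀ s1 s2 : ℝ, 0 < s1 → s1 ≤ s2 → nt s2 = nt s1 + ∫ y in s1..s2, nt' y)
    (c d : ℝ) (hc : 0 < c) (hcd : c ≤ d)
    -- `u` is absolutely continuous on `[c,d]` with derivative `u'`
    (u u' : ℝ → ℝ) (hu'int : IntegrableOn u' (Set.Icc c d))
    (huAC : ∀ x ∈ Set.Icc c d, u x = u c + ∫ y in c..x, u' y) :
    ∀ᵐ t ∂(volume.restrict (Set.Icc c d)),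
      HasDerivAt (fun r => b * u r + ∫ s in (0 : ℝ)..(r - c), u (r - s) * nt s)
        (b * u' t + (∫ s in (0 : ℝ)..(t - c), u' (t - s) * nt s) + nt (t - c) * u c) t := by
  classical
  -- the measurable modification of the Lévy tail
  set m : ℝ → ℝ := fun x => a + (nb (Set.Ioi x)).toReal with hm_def
  have hm_meas : Measurable m := by
    have hmono : Antitone (fun x : ℝ => nb (Set.Ioi x)) :=
      fun x y hxy => measure_mono (Set.Ioi_subset_Ioi hxy)
    exact measurable_const.add (ENNReal.measurable_toReal.comp hmono.measurable)
  have hm_nonneg : ∀ x, 0 ≤ m x := fun x => add_nonneg ha ENNReal.toReal_nonneg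
  have hm_nt : ∀ x : ℝ, 0 < x → nt x = m x := fun x hx => hnt x hx
  have hmX : ∀ X : ℝ, IntegrableOn m (Set.Ioc 0 X) := m_int a ha nb hint
  -- the measurable extension of u'
  set v : ℝ → ℝ := Set.indicator (Set.Icc c d) u' with hv_def
  have hv_int : Integrable v := (integrable_indicator_iff measurableSet_Icc).2 hu'int
  have hv_eq : ∀ x ∈ Set.Icc c d, v x = u' x := fun x hx => Set.indicator_of_mem hx u'
  -- u is continuous, hence bounded, on [c, d]
  have hu_cont : ContinuousOn u (Set.Icc c d) := by
    have h1 : ContinuousOn (fun x => u c + ∫ t in Set.Ioc c x, u' t) (Set.Icc c d) :=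
      continuousOn_const.add (intervalIntegral.continuousOn_primitive hu'int)
    refine h1.congr fun x hx => ?_
    rw [huAC x hx, intervalIntegral.integral_of_le hx.1]
  obtain ⟨Cu, hCu⟩ := isCompact_Icc.exists_bound_of_continuousOn hu_cont
  -- the key Fubini computation
  have key : ∀ t ∈ Set.Icc c d,
      IntegrableOn (fun r => ∫ s in Set.Ioc 0 (r - c), v (r - s) * m s) (Set.Ioc c t) ∧
      (∫ r in Set.Ioc c t, ∫ s in Set.Ioc 0 (r - c), v (r - s) * m s)
        = (∫ s in Set.Ioc 0 (t - c), u (t - s) * m s)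
          - u c * ∫ s in Set.Ioc 0 (t - c), m s := by
    intro t ht
    obtain ⟨hct, htd⟩ := ht
    set μ₁ := volume.restrict (Set.Ioc c t) with hμ₁
    set μ₂ := volume.restrict (Set.Ioc 0 (t - c)) with hμ₂
    set K : ℝ × ℝ → ℝ :=
      fun p => Set.indicator {q : ℝ × ℝ | q.2 + c ≤ q.1}
        (fun q => v (q.1 - q.2) * m q.2) p with hK_def
    have hSmeas : MeasurableSet {q : ℝ × ℝ | q.2 + c ≤ q.1} :=
      measurableSet_le (measurable_snd.add_const c) measurable_fst
    have hvsub : AEStronglyMeasurable (fun q : ℝ × ℝ => v (q.1 - q.2)) (μ₁.prod μ₂) := by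
      have h1 : AEStronglyMeasurable (fun q : ℝ × ℝ => v (q.1 - q.2))
          ((volume : Measure ℝ).prod (volume : Measure ℝ)) :=
        hv_int.aestronglyMeasurable.comp_quasiMeasurePreserving
          (quasiMeasurePreserving_sub_of_right_invariant volume volume)
      have h2 := h1.restrict (s := (Set.Ioc c t) ×ˢ (Set.Ioc 0 (t - c)))
      rwa [hμ₁, hμ₂, Measure.prod_restrict]
    have hK_aesm : AEStronglyMeasurable K (μ₁.prod μ₂) := by
      refine AEStronglyMeasurable.indicator ?_ hSmeas
      exact hvsub.mul ((hm_meas.comp measurable_snd).aestronglyMeasurable)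
    have hK_int : Integrable K (μ₁.prod μ₂) := by
      refine ⟨hK_aesm, ?_⟩
      show (∫⁻ p, (‖K p‖₊ : ℝ≥0∞) ∂(μ₁.prod μ₂)) < ⊤
      have hle : ∀ p : ℝ × ℝ,
          (‖K p‖₊ : ℝ≥0∞) ≤ (‖v (p.1 - p.2)‖₊ : ℝ≥0∞) * (‖m p.2‖₊ : ℝ≥0∞) := by
        intro p
        by_cases hp : p ∈ {q : ℝ × ℝ | q.2 + c ≤ q.1}
        · rw [hK_def]
          simp only [Set.indicator_of_mem hp]
          rw [← ENNReal.coe_mul, ← nnnorm_mul]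
        · rw [hK_def]
          simp only [Set.indicator_of_notMem hp]
          simp
      have hmeas2 : AEMeasurable
          (fun p : ℝ × ℝ => (‖v (p.1 - p.2)‖₊ : ℝ≥0∞) * (‖m p.2‖₊ : ℝ≥0∞)) (μ₁.prod μ₂) :=
        hvsub.enorm.mul ((hm_meas.comp measurable_snd).aestronglyMeasurable.enorm)
      calc ∫⁻ p, (‖K p‖₊ : ℝ≥0∞) ∂(μ₁.prod μ₂)
          ≤ ∫⁻ p, (‖v (p.1 - p.2)‖₊ : ℝ≥0∞) * (‖m p.2‖₊ : ℝ≥0∞) ∂(μ₁.prod μ₂) :=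
            lintegral_mono hle
        _ = ∫⁻ s, ∫⁻ r, (‖v (r - s)‖₊ : ℝ≥0∞) * (‖m s‖₊ : ℝ≥0∞) ∂μ₁ ∂μ₂ :=
            lintegral_prod_symm _ hmeas2
        _ ≤ ∫⁻ s, (∫⁻ x, (‖v x‖₊ : ℝ≥0∞)) * (‖m s‖₊ : ℝ≥0∞) ∂μ₂ := by
            refine lintegral_mono fun s => ?_
            rw [lintegral_mul_const' _ _ ENNReal.coe_ne_top]
            refine mul_le_mul_left ?_ _
            refine le_trans (lintegral_mono' Measure.restrict_le_self le_rfl) ?_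
            rw [lintegral_sub_right_eq_self (fun x => (‖v x‖₊ : ℝ≥0∞)) s]
        _ = (∫⁻ x, (‖v x‖₊ : ℝ≥0∞)) * ∫⁻ s, (‖m s‖₊ : ℝ≥0∞) ∂μ₂ := by
            exact (lintegral_const_mul' _ _ hv_int.2.ne)
        _ < ⊤ := ENNReal.mul_lt_top hv_int.2 (hmX (t - c)).2
    -- evaluation of the slices
    have eval1 : ∀ r ∈ Set.Ioc c t,
        (∫ s, K (r, s) ∂μ₂) = ∫ s in Set.Ioc 0 (r - c), v (r - s) * m s := by
      intro r hr
      have e1 : (fun s => K (r, s))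
          = Set.indicator (Set.Iic (r - c)) (fun s => v (r - s) * m s) := by
        funext s
        rw [hK_def]
        simp only [Set.indicator_apply, Set.mem_setOf_eq, Set.mem_Iic, le_sub_iff_add_le]
      rw [e1, integral_indicator measurableSet_Iic, hμ₂,
        Measure.restrict_restrict measurableSet_Iic]
      congr 1
      have : Set.Iic (r - c) ∩ Set.Ioc 0 (t - c) = Set.Ioc 0 (r - c) := by
        ext x
        simp only [Set.mem_inter_iff, Set.mem_Iic, Set.mem_Ioc]
        constructor
        · rintro ⟨h1, h2, h3⟩; exact ⟨h2, h1⟩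
        · rintro ⟨h1, h2⟩; exact ⟨h2, h1, by linarith [hr.2]⟩
      rw [this]
    have eval2 : ∀ s ∈ Set.Ioc (0:ℝ) (t - c),
        (∫ r, K (r, s) ∂μ₁) = m s * (u (t - s) - u c) := by
      intro s hs
      have e1 : (fun r => K (r, s))
          = Set.indicator (Set.Ici (s + c)) (fun r => v (r - s) * m s) := by
        funext r
        rw [hK_def]
        simp only [Set.indicator_apply, Set.mem_setOf_eq, Set.mem_Ici]
      rw [e1, integral_indicator measurableSet_Ici, hμ₁,
        Measure.restrict_restrict measurableSet_Ici]
      have hset : Set.Ici (s + c) ∩ Set.Ioc c t = Set.Icc (s + c) t := by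
        ext x
        simp only [Set.mem_inter_iff, Set.mem_Ici, Set.mem_Ioc, Set.mem_Icc]
        constructor
        · rintro ⟨h1, h2, h3⟩; exact ⟨h1, h3⟩
        · rintro ⟨h1, h2⟩; exact ⟨h1, by linarith [hs.1], h2⟩
      rw [hset, integral_Icc_eq_integral_Ioc,
        ← intervalIntegral.integral_of_le (by linarith [hs.2] : s + c ≤ t)]
      have e2 : (∫ r in (s+c)..t, v (r - s) * m s) = (∫ r in (s+c)..t, v (r - s)) * m s :=
        intervalIntegral.integral_mul_const _ _
      rw [e2]
      have e3 := intervalIntegral.integral_comp_sub_right (a := s + c) (b := t) (fun x => v x) s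
      rw [e3]
      have h2 : s + c - s = c := by ring
      rw [h2]
      have e4 : (∫ x in c..(t - s), v x) = ∫ x in c..(t - s), u' x := by
        refine intervalIntegral.integral_congr fun x hx => ?_
        rw [Set.uIcc_of_le (by linarith [hs.2] : c ≤ t - s)] at hx
        exact hv_eq x ⟨hx.1, by linarith [hx.2, hs.1]⟩
      rw [e4]
      have e5 := huAC (t - s) ⟨by linarith [hs.2], by linarith [hs.1]⟩
      rw [show (∫ x in c..(t - s), u' x) = u (t - s) - u c by rw [e5]; ring]
      ring
    -- integrability of inner integral
    have hq_int : IntegrableOn (fun r => ∫ s in Set.Ioc 0 (r - c), v (r - s) * m s)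
        (Set.Ioc c t) := by
      have h1 := hK_int.integral_prod_left
      refine h1.congr ?_
      rw [hμ₁]
      filter_upwards [ae_restrict_mem measurableSet_Ioc] with r hr
      exact eval1 r hr
    refine ⟨hq_int, ?_⟩
    have swap := integral_integral_swap (f := fun r s => K (r, s)) (μ := μ₁) (ν := μ₂) hK_int
    have L : (∫ r, ∫ s, K (r, s) ∂μ₂ ∂μ₁)
        = ∫ r in Set.Ioc c t, ∫ s in Set.Ioc 0 (r - c), v (r - s) * m s := by
      refine integral_congr_ae ?_
      rw [hμ₁]
      filter_upwards [ae_restrict_mem measurableSet_Ioc] with r hr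
      exact eval1 r hr
    have R : (∫ s, ∫ r, K (r, s) ∂μ₁ ∂μ₂)
        = ∫ s in Set.Ioc 0 (t - c), m s * (u (t - s) - u c) := by
      refine integral_congr_ae ?_
      rw [hμ₂]
      filter_upwards [ae_restrict_mem measurableSet_Ioc] with s hs
      exact eval2 s hs
    -- integrability of the pieces on the right
    have hum : IntegrableOn (fun s => u (t - s) * m s) (Set.Ioc 0 (t - c)) := by
      refine Integrable.mono' ((hmX (t - c)).const_mul Cu) ?_ ?_
      · refine AEStronglyMeasurable.mul ?_ hm_meas.aestronglyMeasurable.restrict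
        refine ContinuousOn.aestronglyMeasurable ?_ measurableSet_Ioc
        refine hu_cont.comp (Continuous.continuousOn (continuous_const.sub continuous_id)) ?_
        intro s hs
        exact ⟨by linarith [hs.2], by linarith [hs.1, htd]⟩
      · filter_upwards [ae_restrict_mem measurableSet_Ioc] with s hs
        have h1 : t - s ∈ Set.Icc c d := ⟨by linarith [hs.2], by linarith [hs.1, htd]⟩
        rw [norm_mul, Real.norm_of_nonneg (hm_nonneg s)]
        have h3 : (0:ℝ) ≤ Cu := le_trans (norm_nonneg _) (hCu (t - s) h1)
        exact mul_le_mul_of_nonneg_right (hCu (t - s) h1) (hm_nonneg s)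
    have hcm : IntegrableOn (fun s => u c * m s) (Set.Ioc 0 (t - c)) :=
      (hmX (t - c)).const_mul (u c)
    rw [← L, swap, R]
    have expand : ∀ s ∈ Set.Ioc (0:ℝ) (t - c),
        m s * (u (t - s) - u c) = u (t - s) * m s - u c * m s := fun s hs => by ring
    rw [setIntegral_congr_fun measurableSet_Ioc expand, integral_sub hum hcm,
      integral_const_mul]
  -- the almost-everywhere derivative
  set w : ℝ → ℝ := fun r => (∫ s in Set.Ioc 0 (r - c), v (r - s) * m s) + u c * m (r - c)
    with hw_def
  have htr_int : IntegrableOn (fun r => u c * m (r - c)) (Set.Ioc c d) := by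
    have h1 : IntervalIntegrable m volume 0 (d - c) :=
      (intervalIntegrable_iff_integrableOn_Ioc_of_le (by linarith)).2 (hmX (d - c))
    have h2 : IntervalIntegrable (fun x => m (x - c)) volume c d := by
      have := h1.comp_sub_right c
      simpa using this
    exact ((intervalIntegrable_iff_integrableOn_Ioc_of_le hcd).1 h2).const_mul (u c)
  have hw_int : IntegrableOn w (Set.Ioc c d) :=
    ((key d ⟨hcd, le_refl d⟩).1).add htr_int
  have hw_eq : ∀ t ∈ Set.Icc c d,
      (∫ s in (0:ℝ)..(t - c), u (t - s) * nt s) = ∫ r in Set.Ioc c t, w r := by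
    intro t ht
    have h0 : (0:ℝ) ≤ t - c := by linarith [ht.1]
    rw [intervalIntegral.integral_of_le h0]
    have hnteq : ∀ s ∈ Set.Ioc (0:ℝ) (t - c),
        u (t - s) * nt s = u (t - s) * m s := fun s hs => by rw [hm_nt s hs.1]
    rw [setIntegral_congr_fun measurableSet_Ioc hnteq]
    have htr_int' : IntegrableOn (fun r => u c * m (r - c)) (Set.Ioc c t) :=
      htr_int.mono_set (Set.Ioc_subset_Ioc_right ht.2)
    have htr : (∫ r in Set.Ioc c t, u c * m (r - c))
        = u c * ∫ s in Set.Ioc 0 (t - c), m s := by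
      rw [integral_const_mul]
      congr 1
      rw [← intervalIntegral.integral_of_le ht.1]
      rw [intervalIntegral.integral_comp_sub_right m c]
      rw [show c - c = (0:ℝ) by ring]
      rw [intervalIntegral.integral_of_le h0]
    rw [hw_def, integral_add (key t ht).1 htr_int', (key t ht).2, htr]
    ring
  -- FTC via Lebesgue differentiation
  set w0 : ℝ → ℝ := Set.indicator (Set.Ioc c d) w with hw0_def
  have hw0_int : Integrable w0 := (integrable_indicator_iff measurableSet_Ioc).2 hw_int
  have A1 := ae_hasDerivAt_primitive v hv_int c
  have A2 := ae_hasDerivAt_primitive w0 hw0_int c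
  have hIoo : ∀ᵐ t ∂(volume.restrict (Set.Icc c d)), t ∈ Set.Ioo c d := by
    rw [ae_restrict_iff' measurableSet_Icc]
    have h0 : (volume : Measure ℝ) {c, d} = 0 :=
      (Set.toFinite ({c, d} : Set ℝ)).measure_zero volume
    filter_upwards [measure_eq_zero_iff_ae_notMem.1 h0] with x hx hmem
    constructor
    · exact lt_of_le_of_ne hmem.1 (fun h => hx (by simp [h.symm]))
    · exact lt_of_le_of_ne hmem.2 (fun h => hx (by simp [h]))
  filter_upwards [hIoo, ae_restrict_of_ae A1, ae_restrict_of_ae A2] with t htIoo ht1 ht2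
  obtain ⟨hct, htd⟩ := htIoo
  have hP : HasDerivAt (fun y => b * (u c + ∫ x in c..y, v x) + ∫ x in c..y, w0 x)
      (b * v t + w0 t) t := by
    have h1 : HasDerivAt (fun y => u c + ∫ x in c..y, v x) (v t) t := ht1.const_add (u c)
    exact (h1.const_mul b).add ht2
  have hEq : (fun y => b * (u c + ∫ x in c..y, v x) + ∫ x in c..y, w0 x)
      =ᶠ[nhds t] (fun r => b * u r + ∫ s in (0:ℝ)..(r - c), u (r - s) * nt s) := by
    filter_upwards [isOpen_Ioo.mem_nhds ⟨hct, htd⟩] with y hy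
    have hy' : y ∈ Set.Icc c d := ⟨hy.1.le, hy.2.le⟩
    have e1 : (∫ x in c..y, v x) = ∫ x in c..y, u' x := by
      refine intervalIntegral.integral_congr fun x hx => ?_
      rw [Set.uIcc_of_le hy.1.le] at hx
      exact hv_eq x ⟨hx.1, le_trans hx.2 hy'.2⟩
    have e2 : (∫ x in c..y, w0 x) = ∫ r in Set.Ioc c y, w r := by
      rw [intervalIntegral.integral_of_le hy.1.le]
      refine setIntegral_congr_fun measurableSet_Ioc fun r hr => ?_
      exact Set.indicator_of_mem (Set.Ioc_subset_Ioc_right hy'.2 hr) w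
    rw [e1, ← huAC y hy', e2, ← hw_eq y hy']
  have hfin := hP.congr_of_eventuallyEq hEq.symm
  have hval : b * v t + w0 t
      = b * u' t + (∫ s in (0:ℝ)..(t - c), u' (t - s) * nt s) + nt (t - c) * u c := by
    have hv_t : v t = u' t := hv_eq t (Set.mem_Icc.2 ⟨hct.le, htd.le⟩)
    have hw0_t : w0 t = w t := Set.indicator_of_mem (Set.mem_Ioc.2 ⟨hct, htd.le⟩) w
    have hmid : (∫ s in (0:ℝ)..(t - c), u' (t - s) * nt s)
        = ∫ s in Set.Ioc 0 (t - c), v (t - s) * m s := by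
      rw [intervalIntegral.integral_of_le (by linarith : (0:ℝ) ≤ t - c)]
      refine setIntegral_congr_fun measurableSet_Ioc fun s hs => ?_
      rw [hm_nt s hs.1, hv_eq (t - s) ⟨by linarith [hs.2], by linarith [hs.1]⟩]
    have hnt_t : nt (t - c) = m (t - c) := hm_nt _ (by linarith)
    rw [hv_t, hw0_t, hw_def, hmid, hnt_t]
    ring
  rw [hval] at hfin
  exact hfin
end

section
/- Assume f is not identically zero (a + b + ν̄((0,∞)) > 0). Let U : [0,∞) → [0,∞) be nondecreasing and right-continuous with U(0) = 0, subadditive (U(x+y) ≤ U(x) + U(y) for all x, y ≥ 0), and suppose there is a constant c′ > 0 with 1/f(1/x) ≤ c′ U(x) for all x > 0. For t, s > 0 define m_t(s) = ∫_{(0,t]} ( U(t−τ) + U(t+s−τ) ) dU(τ), where dU is the Lebesgue–Stieltjes measure of U. Then for every w > 0 and every t > 0, ∫_w^∞ m_t(s) ds = +∞. -/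
open MeasureTheory Set Real

/-- long-range dependence of the inverse subordinator. Let `U` be the
renewal function of the subordinator with (non-trivial) Laplace exponent `f`:
nondecreasing, right-continuous, `U(0) = 0`, vanishing on the negative half-line,
subadditive, and with `1/f(1/x) ≤ c′ U(x)` for `x > 0`. With
`m_t(s) = ∫_{(0,t]} (U(t−τ) + U(t+s−τ)) dU(τ)` (the correlation moment
`E[L(t)L(t+s)]` of the inverse subordinator), for every `w > 0` and `t > 0` one has
`∫_w^∞ m_t(s) ds = +∞`. -/
theorem long_range_dependence_inverse_subordinator
    (a b : ℝ) (ha : 0 ≤ a) (hb : 0 ≤ b)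
    (nb : Measure ℝ)
    (hint : ∫⁻ s in Set.Ioi (0 : ℝ), ENNReal.ofReal (min s 1) ∂nb ≠ ⊤)
    (f nt : ℝ → ℝ)
    (hf : ∀ l : ℝ, 0 < l →
      f l = a + b * l + ∫ s in Set.Ioi (0 : ℝ), (1 - Real.exp (-(l * s))) ∂nb)
    (hnt : ∀ s : ℝ, 0 < s → nt s = a + (nb (Set.Ioi s)).toReal)
    -- `f` is not identically zero
    (hnontriv : ¬(a = 0 ∧ b = 0 ∧ nb (Set.Ioi (0 : ℝ)) = 0))
    -- the renewal function `U`, nondecreasing and right continuous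
    (U : StieltjesFunction ℝ) (hU0 : ∀ x : ℝ, x ≤ 0 → U x = 0)
    (hUsub : ∀ x y : ℝ, 0 ≤ x → 0 ≤ y → U (x + y) ≤ U x + U y)
    (c' : ℝ) (hc' : 0 < c') (hUf : ∀ x : ℝ, 0 < x → 1 / f (1 / x) ≤ c' * U x)
    (m : ℝ → ℝ → ℝ)
    (hm : ∀ t s : ℝ, 0 < t → 0 < s →
      m t s = ∫ τ in Set.Ioc (0 : ℝ) t, (U (t - τ) + U (t + s - τ)) ∂U.measure) :
    ∀ w t : ℝ, 0 < w → 0 < t →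
      ∫⁻ s in Set.Ioi w, ENNReal.ofReal (m t s) = ⊤ := by

  intro w t hw ht
  have hUmono : Monotone U := U.mono
  have hUnn : ∀ x : ℝ, 0 ≤ U x := by
    intro x
    rcases le_or_gt x 0 with h | h
    · exact (hU0 x h).ge
    · rw [← hU0 0 le_rfl]; exact hUmono h.le
  -- positivity of f on (0,∞)
  have hfpos : ∀ l : ℝ, 0 < l → 0 < f l := by
    intro l hl
    have hg_nonneg : ∀ s : ℝ, 0 < s → 0 ≤ 1 - Real.exp (-(l * s)) := by
      intro s hs
      have : Real.exp (-(l * s)) ≤ 1 := by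
        rw [Real.exp_le_one_iff]; nlinarith
      linarith
    have hint_nonneg : 0 ≤ ∫ s in Set.Ioi (0:ℝ), (1 - Real.exp (-(l * s))) ∂nb :=
      setIntegral_nonneg measurableSet_Ioi fun s hs => hg_nonneg s hs
    rw [hf l hl]
    by_cases ha' : 0 < a
    · nlinarith
    by_cases hb' : 0 < b
    · nlinarith
    have ha0 : a = 0 := le_antisymm (not_lt.mp ha') ha
    have hb0 : b = 0 := le_antisymm (not_lt.mp hb') hb
    have hnb : nb (Set.Ioi (0:ℝ)) ≠ 0 := fun h => hnontriv ⟨ha0, hb0, h⟩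
    have hgpos : ∀ s : ℝ, 0 < s → 0 < 1 - Real.exp (-(l * s)) := by
      intro s hs
      have : Real.exp (-(l * s)) < 1 := by
        rw [Real.exp_lt_one_iff]; nlinarith
      linarith
    -- integrability of the integrand
    have hmeas : Measurable fun s : ℝ => 1 - Real.exp (-(l * s)) := by
      fun_prop
    have hIntOn : IntegrableOn (fun s : ℝ => 1 - Real.exp (-(l * s))) (Set.Ioi 0) nb := by
      refine ⟨hmeas.aestronglyMeasurable, ?_⟩
      rw [hasFiniteIntegral_iff_norm]
      have hbound : ∀ᵐ s ∂(nb.restrict (Set.Ioi 0)),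
          ENNReal.ofReal ‖1 - Real.exp (-(l * s))‖ ≤
            ENNReal.ofReal (max l 1) * ENNReal.ofReal (min s 1) := by
        filter_upwards [ae_restrict_mem measurableSet_Ioi] with s hs
        have hs' : (0:ℝ) < s := hs
        rw [Real.norm_eq_abs, abs_of_nonneg (hg_nonneg s hs'), ← ENNReal.ofReal_mul
          (le_max_of_le_right zero_le_one)]
        apply ENNReal.ofReal_le_ofReal
        have h1 : 1 - Real.exp (-(l * s)) ≤ l * s := by
          nlinarith [Real.add_one_le_exp (-(l * s))]
        have h2 : 1 - Real.exp (-(l * s)) ≤ 1 := by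
          have : (0:ℝ) < Real.exp (-(l * s)) := Real.exp_pos _
          linarith
        rcases le_total s 1 with hss | hss
        · rw [min_eq_left hss]
          calc 1 - Real.exp (-(l * s)) ≤ l * s := h1
            _ ≤ max l 1 * s := by nlinarith [le_max_left l 1]
        · rw [min_eq_right hss]
          calc 1 - Real.exp (-(l * s)) ≤ 1 := h2
            _ ≤ max l 1 * 1 := by nlinarith [le_max_right l 1]
      calc ∫⁻ s in Set.Ioi (0:ℝ), ENNReal.ofReal ‖1 - Real.exp (-(l * s))‖ ∂nb
          ≤ ∫⁻ s in Set.Ioi (0:ℝ), ENNReal.ofReal (max l 1) * ENNReal.ofReal (min s 1) ∂nb :=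
            lintegral_mono_ae hbound
        _ = ENNReal.ofReal (max l 1) * ∫⁻ s in Set.Ioi (0:ℝ), ENNReal.ofReal (min s 1) ∂nb :=
            lintegral_const_mul' _ _ ENNReal.ofReal_ne_top
        _ < ⊤ := ENNReal.mul_lt_top ENNReal.ofReal_lt_top hint.lt_top
    have hpos : 0 < ∫ s in Set.Ioi (0:ℝ), (1 - Real.exp (-(l * s))) ∂nb := by
      rw [setIntegral_pos_iff_support_of_nonneg_ae ?_ hIntOn]
      · have hsupp : Set.Ioi (0:ℝ) ⊆ Function.support fun s => 1 - Real.exp (-(l * s)) := by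
          intro s hs
          exact (hgpos s hs).ne'
        rw [Set.inter_eq_right.mpr hsupp]
        exact pos_iff_ne_zero.mpr hnb
      · filter_upwards [ae_restrict_mem measurableSet_Ioi] with s hs
        exact hg_nonneg s hs
    rw [ha0, hb0]
    simpa using hpos
  have hUpos : ∀ x : ℝ, 0 < x → 0 < U x := by
    intro x hx
    have hfx : 0 < f (1 / x) := hfpos _ (by positivity)
    have h1 : 0 < 1 / f (1 / x) := by positivity
    have h2 := hUf x hx
    nlinarith
  have hμt : U.measure (Set.Ioc 0 t) = ENNReal.ofReal (U t) := by
    rw [U.measure_Ioc, hU0 0 le_rfl, sub_zero]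
  have hUmeas : Measurable U := hUmono.measurable
  have key : ∀ s : ℝ, w < s → U w * U t ≤ m t s := by
    intro s hs
    have hs0 : 0 < s := hw.trans hs
    rw [hm t s ht hs0]
    have hintg : IntegrableOn (fun τ => U (t - τ) + U (t + s - τ)) (Set.Ioc 0 t) U.measure := by
      apply Measure.integrableOn_of_bounded (M := U t + U (t + s))
      · rw [hμt]; exact ENNReal.ofReal_ne_top
      · exact ((hUmeas.comp (measurable_const.sub measurable_id)).add
          (hUmeas.comp (measurable_const.sub measurable_id))).aestronglyMeasurable
      · filter_upwards [ae_restrict_mem measurableSet_Ioc] with τ hτ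
        have h1 : U (t - τ) ≤ U t := hUmono (by linarith [hτ.1])
        have h2 : U (t + s - τ) ≤ U (t + s) := hUmono (by linarith [hτ.1])
        have h3 : 0 ≤ U (t - τ) := hUnn _
        have h4 : 0 ≤ U (t + s - τ) := hUnn _
        rw [Real.norm_eq_abs, abs_of_nonneg (by linarith)]
        linarith
    calc U w * U t = ∫ _τ in Set.Ioc (0:ℝ) t, U w ∂U.measure := by
          rw [setIntegral_const, measureReal_def, hμt, ENNReal.toReal_ofReal (hUnn t), smul_eq_mul, mul_comm]
      _ ≤ ∫ τ in Set.Ioc (0:ℝ) t, (U (t - τ) + U (t + s - τ)) ∂U.measure := by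
          apply setIntegral_mono_on
          · exact (integrableOn_const_iff).mpr (Or.inr (by rw [hμt]; exact ENNReal.ofReal_lt_top))
          · exact hintg
          · exact measurableSet_Ioc
          · intro τ hτ
            have h2 : U w ≤ U (t + s - τ) := hUmono (by linarith [hτ.2])
            have h3 : 0 ≤ U (t - τ) := hUnn _
            linarith
  have hc0 : 0 < U w * U t := mul_pos (hUpos w hw) (hUpos t ht)
  have hle : ∫⁻ _s in Set.Ioi w, ENNReal.ofReal (U w * U t) ≤
      ∫⁻ s in Set.Ioi w, ENNReal.ofReal (m t s) :=
    lintegral_mono_ae ((ae_restrict_mem measurableSet_Ioi).mono fun s hs =>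
      ENNReal.ofReal_le_ofReal (key s hs))
  rw [setLIntegral_const, Real.volume_Ioi, ENNReal.mul_top
    (ENNReal.ofReal_pos.mpr hc0).ne'] at hle
  exact top_le_iff.mp hle
end
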